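/- Let n ≥ 1 and let a : {0,1}^n → ℝ satisfy 0 ≤ a(i) ≤ M for all i ∈ {0,1}^n, for some constant M ≥ 0. Then the function f : [0,1] → ℝ defined by f(p) = (1/n) Σ_{i∈{0,1}^n} a(i) · p^{‖i‖₁}(1−p)^{n−‖i‖₁} is M-Lipschitz on [0,1], i.e., |f(p) − f(p')| ≤ M·|p − p'| for all p, p' ∈ [0,1]. -/

import Mathlib

/-- Hamming weight of a bit string. -/
def hwt {n : ℕ} (i : Fin n → Fin 2) : ℕ := (Finset.univ.filter fun k => i k = 1).card

lemma hwt_le {n : ℕ} (i : Fin n → Fin 2) : hwt i ≤ n :=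
  (Finset.card_filter_le _ _).trans (by simp)

lemma hwt_cons {n : ℕ} (b : Fin 2) (i : Fin n → Fin 2) :
    hwt (Fin.cons b i) = (if b = 1 then 1 else 0) + hwt i := by
  simp only [hwt, Finset.card_filter]
  rw [Fin.sum_univ_succ]
  simp

lemma key (n : ℕ) (x y : ℝ) :
    ∑ i : Fin n → Fin 2, x ^ hwt i * y ^ (n - hwt i) = (x + y) ^ n := by
  induction n with
  | zero => simp [hwt]
  | succ n ih =>
    rw [← (Fin.consEquiv (fun _ : Fin (n+1) => Fin 2)).sum_comp, Fintype.sum_prod_type,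
      Fin.sum_univ_two]
    have h0 : ∀ i : Fin n → Fin 2, hwt (Fin.cons (0 : Fin 2) i) = hwt i := by
      intro i; rw [hwt_cons]; norm_num
    have h1 : ∀ i : Fin n → Fin 2, hwt (Fin.cons (1 : Fin 2) i) = hwt i + 1 := by
      intro i; rw [hwt_cons]; simp [add_comm]
    have e0 : ∀ i : Fin n → Fin 2,
        x ^ hwt (Fin.cons (0:Fin 2) i) * y ^ (n + 1 - hwt (Fin.cons (0:Fin 2) i))
          = y * (x ^ hwt i * y ^ (n - hwt i)) := by
      intro i
      rw [h0, Nat.succ_sub (hwt_le i), pow_succ]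
      ring
    have e1 : ∀ i : Fin n → Fin 2,
        x ^ hwt (Fin.cons (1:Fin 2) i) * y ^ (n + 1 - hwt (Fin.cons (1:Fin 2) i))
          = x * (x ^ hwt i * y ^ (n - hwt i)) := by
      intro i
      rw [h1]
      have : n + 1 - (hwt i + 1) = n - hwt i := by omega
      rw [this, pow_succ]
      ring
    have hce : ∀ (b : Fin 2) (i : Fin n → Fin 2),
        (Fin.consEquiv fun _ => Fin 2) (b, i) = Fin.cons b i := fun _ _ => rfl
    simp only [hce]
    rw [Finset.sum_congr rfl (fun i _ => e0 i), Finset.sum_congr rfl (fun i _ => e1 i),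
      ← Finset.mul_sum, ← Finset.mul_sum, ih]
    ring

lemma key_deriv_x (n : ℕ) (x y : ℝ) :
    ∑ i : Fin n → Fin 2, (hwt i : ℝ) * x ^ (hwt i - 1) * y ^ (n - hwt i)
      = n * (x + y) ^ (n - 1) := by
  have h1 : HasDerivAt (fun t : ℝ => ∑ i : Fin n → Fin 2, t ^ hwt i * y ^ (n - hwt i))
      (∑ i : Fin n → Fin 2, (hwt i : ℝ) * x ^ (hwt i - 1) * y ^ (n - hwt i)) x := by
    apply HasDerivAt.fun_sum
    intro i _
    exact (hasDerivAt_pow (hwt i) x).mul_const (y ^ (n - hwt i))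
  have h2 : HasDerivAt (fun t : ℝ => (t + y) ^ n) ((n : ℝ) * (x + y) ^ (n - 1)) x := by
    simpa [Function.comp_def] using (hasDerivAt_pow n (x + y)).comp x ((hasDerivAt_id x).add_const y)
  have hfun : (fun t : ℝ => ∑ i : Fin n → Fin 2, t ^ hwt i * y ^ (n - hwt i))
      = fun t : ℝ => (t + y) ^ n := funext fun t => key n t y
  rw [hfun] at h1
  exact h1.unique h2

lemma key_deriv_y (n : ℕ) (x y : ℝ) :
    ∑ i : Fin n → Fin 2, x ^ hwt i * (((n - hwt i : ℕ) : ℝ) * y ^ (n - hwt i - 1))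
      = n * (x + y) ^ (n - 1) := by
  have h1 : HasDerivAt (fun t : ℝ => ∑ i : Fin n → Fin 2, x ^ hwt i * t ^ (n - hwt i))
      (∑ i : Fin n → Fin 2, x ^ hwt i * (((n - hwt i : ℕ) : ℝ) * y ^ (n - hwt i - 1))) y := by
    apply HasDerivAt.fun_sum
    intro i _
    exact (hasDerivAt_pow (n - hwt i) y).const_mul (x ^ hwt i)
  have h2 : HasDerivAt (fun t : ℝ => (x + t) ^ n) ((n : ℝ) * (x + y) ^ (n - 1)) y := by
    simpa [Function.comp_def] using (hasDerivAt_pow n (x + y)).comp y ((hasDerivAt_id y).const_add x)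
  have hfun : (fun t : ℝ => ∑ i : Fin n → Fin 2, x ^ hwt i * t ^ (n - hwt i))
      = fun t : ℝ => (x + t) ^ n := funext fun t => key n x t
  rw [hfun] at h1
  exact h1.unique h2

/-- If `0 ≤ a(i) ≤ M` for all bit strings `i ∈ {0,1}^n`, then
`f(p) = (1/n) Σ_i a(i) p^{‖i‖₁} (1-p)^{n-‖i‖₁}` is `M`-Lipschitz on `[0,1]`. -/
theorem bernoulli_average_lipschitz {n : ℕ} (hn : 1 ≤ n) (M : ℝ) (hM : 0 ≤ M)
    (a : (Fin n → Fin 2) → ℝ) (ha : ∀ i, 0 ≤ a i ∧ a i ≤ M) :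
    ∀ p ∈ Set.Icc (0 : ℝ) 1, ∀ p' ∈ Set.Icc (0 : ℝ) 1,
      |(1 / (n : ℝ)) * ∑ i : Fin n → Fin 2, a i * p ^ hwt i * (1 - p) ^ (n - hwt i)
        - (1 / (n : ℝ)) * ∑ i : Fin n → Fin 2, a i * p' ^ hwt i * (1 - p') ^ (n - hwt i)|
        ≤ M * |p - p'| := by
  have hn' : (0:ℝ) < (n:ℝ) := by exact_mod_cast Nat.lt_of_lt_of_le Nat.zero_lt_one hn
  set f : ℝ → ℝ := fun q =>
    (1 / (n : ℝ)) * ∑ i : Fin n → Fin 2, a i * q ^ hwt i * (1 - q) ^ (n - hwt i) with hf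
  set D : ℝ → ℝ := fun q => (1 / (n : ℝ)) * ∑ i : Fin n → Fin 2,
      a i * ((hwt i : ℝ) * q ^ (hwt i - 1) * (1 - q) ^ (n - hwt i)
        - q ^ hwt i * (((n - hwt i : ℕ) : ℝ) * (1 - q) ^ (n - hwt i - 1))) with hD
  have hderiv : ∀ q : ℝ, HasDerivAt f (D q) q := by
    intro q
    apply HasDerivAt.const_mul
    apply HasDerivAt.fun_sum
    intro i _
    have hb : HasDerivAt (fun t : ℝ => (1 - t) ^ (n - hwt i))
        (-(((n - hwt i : ℕ) : ℝ) * (1 - q) ^ (n - hwt i - 1))) q := by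
      have := (hasDerivAt_pow (n - hwt i) (1 - q)).comp q ((hasDerivAt_id q).const_sub 1)
      simpa [Function.comp_def] using this
    have ha' : HasDerivAt (fun t : ℝ => a i * t ^ hwt i)
        (a i * ((hwt i : ℝ) * q ^ (hwt i - 1))) q :=
      (hasDerivAt_pow (hwt i) q).const_mul (a i)
    have hmul := ha'.fun_mul hb
    convert hmul using 1
    · rfl
    ring
  have hbound : ∀ q ∈ Set.Icc (0:ℝ) 1, |D q| ≤ M := by
    intro q hq
    obtain ⟨hq0, hq1⟩ := hq
    have h1q : (0:ℝ) ≤ 1 - q := by linarith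
    set S1 := ∑ i : Fin n → Fin 2,
      a i * ((hwt i : ℝ) * q ^ (hwt i - 1) * (1 - q) ^ (n - hwt i)) with hS1
    set S2 := ∑ i : Fin n → Fin 2,
      a i * (q ^ hwt i * (((n - hwt i : ℕ) : ℝ) * (1 - q) ^ (n - hwt i - 1))) with hS2
    have hDq : D q = (1 / (n:ℝ)) * (S1 - S2) := by
      simp only [hD]
      rw [hS1, hS2, ← Finset.sum_sub_distrib]
      congr 1
      apply Finset.sum_congr rfl
      intro i _
      ring
    have hterm1 : ∀ i : Fin n → Fin 2,
        0 ≤ (hwt i : ℝ) * q ^ (hwt i - 1) * (1 - q) ^ (n - hwt i) := fun i =>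
      mul_nonneg (mul_nonneg (Nat.cast_nonneg _) (pow_nonneg hq0 _)) (pow_nonneg h1q _)
    have hterm2 : ∀ i : Fin n → Fin 2,
        0 ≤ q ^ hwt i * (((n - hwt i : ℕ) : ℝ) * (1 - q) ^ (n - hwt i - 1)) := fun i =>
      mul_nonneg (pow_nonneg hq0 _) (mul_nonneg (Nat.cast_nonneg _) (pow_nonneg h1q _))
    have hS1nn : 0 ≤ S1 := Finset.sum_nonneg fun i _ => mul_nonneg (ha i).1 (hterm1 i)
    have hS2nn : 0 ≤ S2 := Finset.sum_nonneg fun i _ => mul_nonneg (ha i).1 (hterm2 i)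
    have hS1ub : S1 ≤ M * n := by
      calc S1 ≤ ∑ i : Fin n → Fin 2,
            M * ((hwt i : ℝ) * q ^ (hwt i - 1) * (1 - q) ^ (n - hwt i)) :=
          Finset.sum_le_sum fun i _ => mul_le_mul_of_nonneg_right (ha i).2 (hterm1 i)
        _ = M * ∑ i : Fin n → Fin 2,
            (hwt i : ℝ) * q ^ (hwt i - 1) * (1 - q) ^ (n - hwt i) := by rw [Finset.mul_sum]
        _ = M * ((n:ℝ) * (q + (1 - q)) ^ (n - 1)) := by rw [key_deriv_x]
        _ = M * n := by rw [show q + (1 - q) = 1 by ring, one_pow, mul_one]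
    have hS2ub : S2 ≤ M * n := by
      calc S2 ≤ ∑ i : Fin n → Fin 2,
            M * (q ^ hwt i * (((n - hwt i : ℕ) : ℝ) * (1 - q) ^ (n - hwt i - 1))) :=
          Finset.sum_le_sum fun i _ => mul_le_mul_of_nonneg_right (ha i).2 (hterm2 i)
        _ = M * ∑ i : Fin n → Fin 2,
            q ^ hwt i * (((n - hwt i : ℕ) : ℝ) * (1 - q) ^ (n - hwt i - 1)) := by
          rw [Finset.mul_sum]
        _ = M * ((n:ℝ) * (q + (1 - q)) ^ (n - 1)) := by rw [key_deriv_y]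
        _ = M * n := by rw [show q + (1 - q) = 1 by ring, one_pow, mul_one]
    have habs : |S1 - S2| ≤ M * n := abs_le.mpr ⟨by linarith, by linarith⟩
    have hpos : (0:ℝ) < 1 / (n:ℝ) := by positivity
    calc |D q| = (1 / (n:ℝ)) * |S1 - S2| := by rw [hDq, abs_mul, abs_of_pos hpos]
      _ ≤ (1 / (n:ℝ)) * (M * n) := mul_le_mul_of_nonneg_left habs (le_of_lt hpos)
      _ = M := by field_simp
  have main : ∀ q ∈ Set.Icc (0:ℝ) 1, ∀ q' ∈ Set.Icc (0:ℝ) 1, q' ≤ q →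
      |f q - f q'| ≤ M * (q - q') := by
    intro q hq q' hq' hle
    rcases eq_or_lt_of_le hle with rfl | hlt
    · simp
    · have hcont : ContinuousOn f (Set.Icc q' q) :=
        fun x _ => (hderiv x).continuousAt.continuousWithinAt
      obtain ⟨c, hc, hceq⟩ := exists_hasDerivAt_eq_slope f D hlt hcont (fun x _ => hderiv x)
      have hcIcc : c ∈ Set.Icc (0:ℝ) 1 :=
        ⟨le_trans hq'.1 (le_of_lt hc.1), le_trans (le_of_lt hc.2) hq.2⟩
      have heq : f q - f q' = D c * (q - q') := by
        rw [hceq, div_mul_cancel₀]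
        exact ne_of_gt (sub_pos.mpr hlt)
      rw [heq, abs_mul, abs_of_pos (by linarith : (0:ℝ) < q - q')]
      exact mul_le_mul_of_nonneg_right (hbound c hcIcc) (by linarith)
  intro p hp p' hp'
  show |f p - f p'| ≤ M * |p - p'|
  rcases le_total p' p with h | h
  · rw [abs_of_nonneg (by linarith : (0:ℝ) ≤ p - p')]
    exact main p hp p' hp' h
  · rw [abs_sub_comm, abs_sub_comm p p', abs_of_nonneg (by linarith : (0:ℝ) ≤ p' - p)]
    exact main p' hp' p hp h
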